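/- Let k be a positive integer with k ≡ 0 (mod 4) and k ≥ 8, and let n be an integer with 0 ≤ n ≤ k/2 − 2. Then (deriv Λ_k)(2n+2) = 2·(2π)^{−k} · (2n+1)! · (k−2n−3)! · (−1)^{n+1} · ζ(2n+2) · ζ(k−2n−2) · ( H_{2n+1} − H_{k−2n−3} + ζ'(2n+2)/ζ(2n+2) − ζ'(k−2n−2)/ζ(k−2n−2) ), as an identity of complex numbers. -/

import Mathlib

open Complex

lemma nat_ne_neg_nat (m : ℕ) : ∀ j : ℕ, ((m : ℂ) + 1) ≠ -j := by
  intro j h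
  have hre := congrArg Complex.re h
  simp at hre
  have h1 : (0:ℝ) ≤ (m:ℝ) := Nat.cast_nonneg m
  have h2 : (0:ℝ) ≤ (j:ℝ) := Nat.cast_nonneg j
  linarith

/-- The completed `L`-function of the weight-`k` Eisenstein series `E_k`:
`Λ_k(s) = (2π)^(−s) · Γ(s) · ζ(s) · ζ(s−k+1)`. -/
noncomputable def completedEisensteinL (k : ℕ) (s : ℂ) : ℂ :=
  (2 * Real.pi : ℂ) ^ (-s) * Complex.Gamma s * riemannZeta s * riemannZeta (s - k + 1)

/-- For `k ≡ 0 (mod 4)`, `k ≥ 8`, and `0 ≤ n ≤ k/2 − 2`,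
`Λ_k'(2n+2) = 2(2π)^{−k} (2n+1)! (k−2n−3)! (−1)^{n+1} ζ(2n+2) ζ(k−2n−2)
  · (H_{2n+1} − H_{k−2n−3} + ζ'(2n+2)/ζ(2n+2) − ζ'(k−2n−2)/ζ(k−2n−2))`. -/
theorem deriv_completedEisensteinL_at_even_point
    (k : ℕ) (hk4 : k % 4 = 0) (hk8 : 8 ≤ k) (n : ℕ) (hn : 2 * n + 4 ≤ k) :
    deriv (completedEisensteinL k) ((2 * n + 2 : ℕ) : ℂ) =
      2 * (2 * Real.pi : ℂ) ^ (-(k : ℂ)) * (Nat.factorial (2 * n + 1) : ℂ) *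
        (Nat.factorial (k - 2 * n - 3) : ℂ) * (-1 : ℂ) ^ (n + 1) *
        riemannZeta ((2 * n + 2 : ℕ) : ℂ) * riemannZeta ((k - 2 * n - 2 : ℕ) : ℂ) *
        ((harmonic (2 * n + 1) : ℂ) - (harmonic (k - 2 * n - 3) : ℂ) +
          deriv riemannZeta ((2 * n + 2 : ℕ) : ℂ) / riemannZeta ((2 * n + 2 : ℕ) : ℂ) -
          deriv riemannZeta ((k - 2 * n - 2 : ℕ) : ℂ) / riemannZeta ((k - 2 * n - 2 : ℕ) : ℂ)) := by
  set s₀ : ℂ := ((2 * n + 2 : ℕ) : ℂ) with hs₀def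
  set w₀ : ℂ := ((k - 2 * n - 2 : ℕ) : ℂ) with hw₀def
  have h2pi_ne : (2 * (Real.pi : ℂ)) ≠ 0 :=
    mul_ne_zero two_ne_zero (by exact_mod_cast Real.pi_ne_zero)
  -- cast facts
  have hw : (k : ℂ) - s₀ = w₀ := by
    have h1 : (k - 2 * n - 2) + (2 * n + 2) = k := by omega
    have h2 := congrArg (Nat.cast : ℕ → ℂ) h1
    push_cast at h2
    rw [hs₀def, hw₀def]; push_cast; linear_combination -h2
  have hs₀cast : s₀ = ((2 * n + 1 : ℕ) : ℂ) + 1 := by rw [hs₀def]; push_cast; ring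
  have hw₀cast : w₀ = ((k - 2 * n - 3 : ℕ) : ℂ) + 1 := by
    have h1 : (k - 2 * n - 3) + 1 = k - 2 * n - 2 := by omega
    rw [hw₀def, ← h1]; push_cast; ring
  -- the open set where the functional-equation rewrite is valid
  have hU : IsOpen {s : ℂ | 1 < ((k : ℂ) - s).re} :=
    isOpen_lt continuous_const (Complex.continuous_re.comp (continuous_const.sub continuous_id))
  have hres₀ : 1 < ((k : ℂ) - s₀).re := by
    rw [hw, hw₀def, Complex.natCast_re]
    exact_mod_cast (by omega : 1 < k - 2 * n - 2)
  -- the locally-equal function g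
  set g : ℂ → ℂ := fun z => 2 * (2 * (Real.pi : ℂ)) ^ (-(k : ℂ)) *
      (Complex.Gamma z * riemannZeta z *
        (Complex.Gamma ((k : ℂ) - z) * Complex.cos ((Real.pi : ℂ) * ((k : ℂ) - z) / 2) *
          riemannZeta ((k : ℂ) - z))) with hgdef
  have heq : completedEisensteinL k =ᶠ[nhds s₀] g := by
    filter_upwards [hU.mem_nhds hres₀] with z hz
    have hz1 : 1 < ((k : ℂ) - z).re := hz
    have hne : ∀ j : ℕ, (k : ℂ) - z ≠ -j := by
      intro j h
      rw [h] at hz1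
      simp at hz1
      have : (0:ℝ) ≤ (j:ℝ) := Nat.cast_nonneg j
      linarith
    have hne1 : (k : ℂ) - z ≠ 1 := by intro h; rw [h] at hz1; norm_num at hz1
    have harg : z - (k : ℂ) + 1 = 1 - ((k : ℂ) - z) := by ring
    have hpow : (2 * (Real.pi : ℂ)) ^ (-(k : ℂ))
        = (2 * (Real.pi : ℂ)) ^ (-z) * (2 * (Real.pi : ℂ)) ^ (-((k : ℂ) - z)) := by
      rw [show -(k : ℂ) = -z + -((k : ℂ) - z) by ring, Complex.cpow_add _ _ h2pi_ne]
    rw [completedEisensteinL, harg, riemannZeta_one_sub hne hne1, hgdef]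
    simp only
    rw [hpow]
    ring
  -- derivative data
  have hs₀ne : ∀ j : ℕ, s₀ ≠ -j := by rw [hs₀cast]; exact nat_ne_neg_nat _
  have hw₀ne : ∀ j : ℕ, w₀ ≠ -j := by rw [hw₀cast]; exact nat_ne_neg_nat _
  have hs₀ne1 : s₀ ≠ 1 := by
    rw [hs₀def]
    exact_mod_cast (by omega : (2 * n + 2 : ℕ) ≠ 1)
  have hw₀ne1 : w₀ ≠ 1 := by
    rw [hw₀def]
    exact_mod_cast (by omega : (k - 2 * n - 2 : ℕ) ≠ 1)
  have hres : 1 < s₀.re := by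
    rw [hs₀def, Complex.natCast_re]
    exact_mod_cast (by omega : 1 < 2 * n + 2)
  have hrew : 1 < w₀.re := by
    rw [hw₀def, Complex.natCast_re]
    exact_mod_cast (by omega : 1 < k - 2 * n - 2)
  have hza0 : riemannZeta s₀ ≠ 0 := riemannZeta_ne_zero_of_one_lt_re hres
  have hzb0 : riemannZeta w₀ ≠ 0 := riemannZeta_ne_zero_of_one_lt_re hrew
  -- trig values
  obtain ⟨m, hm⟩ : ∃ m : ℕ, k - 2 * n - 2 = 2 * m := ⟨k / 2 - n - 1, by omega⟩
  have hargtrig : (Real.pi : ℂ) * ((k : ℂ) - s₀) / 2 = (m : ℂ) * (Real.pi : ℂ) := by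
    rw [hw, hw₀def, hm]; push_cast; ring
  have hsinv : Complex.sin ((Real.pi : ℂ) * ((k : ℂ) - s₀) / 2) = 0 := by
    rw [hargtrig]; exact Complex.sin_nat_mul_pi m
  have hcosv : Complex.cos ((Real.pi : ℂ) * ((k : ℂ) - s₀) / 2) = (-1 : ℂ) ^ (n + 1) := by
    rw [hargtrig]
    have h1 : ((m : ℂ) * (Real.pi : ℂ)) = (((m : ℝ) * Real.pi : ℝ) : ℂ) := by push_cast; ring
    have h2 : Real.cos ((m : ℝ) * Real.pi) = (-1 : ℝ) ^ m := by
      have := Real.cos_nat_mul_pi_sub 0 m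
      simpa using this
    rw [h1, ← Complex.ofReal_cos, h2]
    push_cast
    rw [neg_one_pow_eq_pow_mod_two, neg_one_pow_eq_pow_mod_two (n := n + 1),
      (by omega : m % 2 = (n + 1) % 2)]
  -- HasDerivAt facts
  have hsub : HasDerivAt (fun s : ℂ => (k : ℂ) - s) (-1) s₀ := by
    simpa using (hasDerivAt_id s₀).const_sub (k : ℂ)
  have hGa : HasDerivAt Complex.Gamma (deriv Complex.Gamma s₀) s₀ :=
    (Complex.differentiableAt_Gamma s₀ hs₀ne).hasDerivAt
  have hZa : HasDerivAt riemannZeta (deriv riemannZeta s₀) s₀ :=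
    (differentiableAt_riemannZeta hs₀ne1).hasDerivAt
  have hGb : HasDerivAt (fun s : ℂ => Complex.Gamma ((k : ℂ) - s))
      (deriv Complex.Gamma ((k : ℂ) - s₀) * -1) s₀ :=
    ((Complex.differentiableAt_Gamma _ (hw ▸ hw₀ne)).hasDerivAt).comp s₀ hsub
  have hZb : HasDerivAt (fun s : ℂ => riemannZeta ((k : ℂ) - s))
      (deriv riemannZeta ((k : ℂ) - s₀) * -1) s₀ :=
    ((differentiableAt_riemannZeta (hw ▸ hw₀ne1)).hasDerivAt).comp s₀ hsub
  have hinner : HasDerivAt (fun s : ℂ => (Real.pi : ℂ) * ((k : ℂ) - s) / 2)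
      ((Real.pi : ℂ) * -1 / 2) s₀ := (hsub.const_mul _).div_const 2
  have hcos : HasDerivAt (fun s : ℂ => Complex.cos ((Real.pi : ℂ) * ((k : ℂ) - s) / 2)) 0 s₀ := by
    have h := (Complex.hasDerivAt_cos ((Real.pi : ℂ) * ((k : ℂ) - s₀) / 2)).comp s₀ hinner
    rw [hsinv] at h
    simp only [neg_zero, zero_mul] at h
    exact h
  have hF : HasDerivAt g
      (2 * (2 * (Real.pi : ℂ)) ^ (-(k : ℂ)) *
        ((deriv Complex.Gamma s₀ * riemannZeta s₀ + Complex.Gamma s₀ * deriv riemannZeta s₀) *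
            (Complex.Gamma ((k : ℂ) - s₀) * Complex.cos ((Real.pi : ℂ) * ((k : ℂ) - s₀) / 2) *
              riemannZeta ((k : ℂ) - s₀)) +
          Complex.Gamma s₀ * riemannZeta s₀ *
            ((deriv Complex.Gamma ((k : ℂ) - s₀) * -1 *
                  Complex.cos ((Real.pi : ℂ) * ((k : ℂ) - s₀) / 2) +
                Complex.Gamma ((k : ℂ) - s₀) * 0) * riemannZeta ((k : ℂ) - s₀) +
              Complex.Gamma ((k : ℂ) - s₀) * Complex.cos ((Real.pi : ℂ) * ((k : ℂ) - s₀) / 2) *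
                (deriv riemannZeta ((k : ℂ) - s₀) * -1)))) s₀ := by
    rw [hgdef]
    exact ((hGa.mul hZa).mul ((hGb.mul hcos).mul hZb)).const_mul _
  have hderiv : deriv (completedEisensteinL k) s₀ = _ := heq.deriv_eq.trans hF.deriv
  have hcosv' : Complex.cos ((Real.pi : ℂ) * w₀ / 2) = (-1 : ℂ) ^ (n + 1) := by
    rw [← hw]; exact hcosv
  rw [hderiv, hw, hcosv']
  rw [hs₀cast, Complex.deriv_Gamma_nat (2 * n + 1), Complex.Gamma_nat_eq_factorial (2 * n + 1),
    ← hs₀cast]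
  rw [hw₀cast, Complex.deriv_Gamma_nat (k - 2 * n - 3), Complex.Gamma_nat_eq_factorial (k - 2 * n - 3),
    ← hw₀cast]
  field_simp
  ring
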